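/- The network modularity M(g) = (1/2m) ∑_{i,j} (A_{ij} - k_i k_j/(2m)) δ_{g(i)g(j)} equals twice the covariance of the joint distribution P(i,j) = c_{ij}/(2m) with respect to the distance d_g(i,j) = 1 - δ_{g(i)g(j)}: M(g) = 2·cov_{d_g}(P). -/

import Mathlib

open Finset Matrix

/-- The network modularity `M(g) = (1/2m) ∑_{i,j} (A_{ij} - k_i k_j/(2m)) δ_{g(i)g(j)}` equals
twice the covariance of the joint distribution `P(i,j) = c_{ij}/(2m)` (whose marginals are
`k_i/(2m)`) with respect to the distance `d_g(i,j) = 1 - δ_{g(i)g(j)}`. -/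
theorem modularity_eq_two_cov {n : ℕ} (c : Matrix (Fin n) (Fin n) ℝ) (hc : c.IsSymm)
    (g : Fin n → ℕ) (k : Fin n → ℝ) (hk : ∀ i, k i = ∑ j, c i j)
    (m : ℝ) (hm : m = (1 / 2) * ∑ i, k i) (hm0 : 0 < m) :
    (1 / (2 * m)) * ∑ i, ∑ j,
        (c i j - k i * k j / (2 * m)) * (if g i = g j then (1 : ℝ) else 0)
      = 2 * ((1 / 2) * ∑ i, ∑ j,
          (k i / (2 * m) * (k j / (2 * m)) - c i j / (2 * m)) *
            (1 - if g i = g j then (1 : ℝ) else 0) ^ 2) := by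
  have hm' : (2 * m) ≠ 0 := by positivity
  have hsum : ∑ i, k i = 2 * m := by rw [hm]; ring
  have h1 : ∀ i j : Fin n,
      (k i / (2 * m) * (k j / (2 * m)) - c i j / (2 * m)) *
          (1 - if g i = g j then (1 : ℝ) else 0) ^ 2
        = (k i * k j / (2 * m) - c i j) / (2 * m)
          + 1 / (2 * m) * ((c i j - k i * k j / (2 * m)) *
              (if g i = g j then (1 : ℝ) else 0)) := by
    intro i j
    by_cases h : g i = g j <;> simp [h] <;> field_simp <;> ring
  have h0 : ∑ i, ∑ j, (k i * k j / (2 * m) - c i j) / (2 * m) = 0 := by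
    have : ∀ i : Fin n, ∑ j, (k i * k j / (2 * m) - c i j) / (2 * m)
        = (k i * (2 * m) / (2 * m) - k i) / (2 * m) := by
      intro i
      rw [← Finset.sum_div, Finset.sum_sub_distrib, ← Finset.sum_div, ← Finset.mul_sum,
        hsum, ← hk]
    simp only [this]
    field_simp
    simp
  simp only [h1, Finset.sum_add_distrib, ← Finset.mul_sum]
  rw [h0]
  ring
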